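/- Let p and q be real polynomials with deg p = m, deg q = m−1, both with positive leading coefficients, and suppose their zeros strictly interlace: if u_1 > ... > u_m are the zeros of p and v_1 > ... > v_{m−1} the zeros of q, then u_1 > v_1 > u_2 > v_2 > ... > v_{m−1} > u_m. Then p − q has at least one real zero in each of the m intervals (u_1, ∞), (u_2, v_1), ..., (u_m, v_{m−1}), and p + q has at least one real zero in each of the m intervals (v_1, u_1), ..., (v_{m−1}, u_{m−1}), (−∞, u_m). Consequently p − q and p + q each have m distinct real zeros, and the combined 2m zeros are all distinct. -/

import Mathlib

open Polynomial Finset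

private lemma ivt_zero (f : Polynomial ℝ) {a b : ℝ} (hab : a ≤ b)
    (ha : f.eval a < 0) (hb : 0 < f.eval b) :
    ∃ z, a < z ∧ z < b ∧ f.eval z = 0 := by
  have hc : ContinuousOn (fun x => f.eval x) (Set.Icc a b) := f.continuous.continuousOn
  have h0 : (0:ℝ) ∈ Set.Ioo (f.eval a) (f.eval b) := ⟨ha, hb⟩
  obtain ⟨z, hz, hz0⟩ := intermediate_value_Ioo hab hc h0
  exact ⟨z, hz.1, hz.2, hz0⟩

private lemma ivt_zero' (f : Polynomial ℝ) {a b : ℝ} (hab : a ≤ b)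
    (h : f.eval a * f.eval b < 0) : ∃ z, a < z ∧ z < b ∧ f.eval z = 0 := by
  rcases lt_trichotomy (f.eval a) 0 with h1 | h1 | h1
  · have h2 : 0 < f.eval b := by nlinarith
    exact ivt_zero f hab h1 h2
  · rw [h1] at h; simp at h
  · have h2 : f.eval b < 0 := by nlinarith
    obtain ⟨z, hz1, hz2, hz3⟩ := ivt_zero (-f) hab (by simpa using h1) (by simpa using h2)
    exact ⟨z, hz1, hz2, by simpa using hz3⟩

private lemma sign_prod_aux (w : ℕ → ℝ) (x : ℝ) (n k : ℕ) (hk : k ≤ n)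
    (hneg : ∀ j, j < k → x < w j) (hpos : ∀ j, k ≤ j → j < n → w j < x) :
    0 < (-1:ℝ)^k * ∏ j ∈ Finset.range n, (x - w j) := by
  have hsplit : ∏ j ∈ Finset.range n, (x - w j)
      = (∏ j ∈ Finset.range k, (x - w j)) * ∏ j ∈ Finset.Ico k n, (x - w j) := by
    rw [Finset.range_eq_Ico, Finset.range_eq_Ico]
    exact (Finset.prod_Ico_consecutive (fun j => x - w j) (Nat.zero_le k) hk).symm
  have h1 : ∏ j ∈ Finset.range k, (x - w j)
      = (-1:ℝ)^k * ∏ j ∈ Finset.range k, (w j - x) := by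
    calc ∏ j ∈ Finset.range k, (x - w j)
        = ∏ j ∈ Finset.range k, (-1:ℝ) * (w j - x) :=
          Finset.prod_congr rfl fun j _ => by ring
      _ = (∏ _j ∈ Finset.range k, (-1:ℝ)) * ∏ j ∈ Finset.range k, (w j - x) :=
          Finset.prod_mul_distrib
      _ = (-1:ℝ)^k * ∏ j ∈ Finset.range k, (w j - x) := by
          rw [Finset.prod_const, Finset.card_range]
  have h2 : 0 < ∏ j ∈ Finset.range k, (w j - x) :=
    Finset.prod_pos fun j hj => sub_pos.2 (hneg j (Finset.mem_range.1 hj))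
  have h3 : 0 < ∏ j ∈ Finset.Ico k n, (x - w j) :=
    Finset.prod_pos fun j hj => sub_pos.2 (hpos j (Finset.mem_Ico.1 hj).1 (Finset.mem_Ico.1 hj).2)
  have h4 : (-1:ℝ)^k * (-1:ℝ)^k = 1 := by
    rw [← pow_add]; exact Even.neg_one_pow ⟨k, rfl⟩
  have key : (-1:ℝ)^k * ∏ j ∈ Finset.range n, (x - w j)
      = (∏ j ∈ Finset.range k, (w j - x)) * ∏ j ∈ Finset.Ico k n, (x - w j) := by
    rw [hsplit, h1, ← mul_assoc, ← mul_assoc, h4, one_mul]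
  rw [key]
  exact mul_pos h2 h3

theorem interlacing_sum_diff (m : ℕ) (hm : 1 ≤ m)
    (u v : ℕ → ℝ) (cp cq : ℝ) (hcp : 0 < cp) (hcq : 0 < cq)
    (p q : Polynomial ℝ)
    (hp : p = C cp * ∏ i ∈ Finset.range m, (X - C (u (i+1))))
    (hq : q = C cq * ∏ i ∈ Finset.range (m-1), (X - C (v (i+1))))
    (hint : ∀ i, 1 ≤ i → i ≤ m - 1 → u i > v i ∧ v i > u (i+1)) :
    (∃ z, u 1 < z ∧ (p - q).eval z = 0) ∧
    (∀ i, 2 ≤ i → i ≤ m → ∃ z, u i < z ∧ z < v (i-1) ∧ (p - q).eval z = 0) ∧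
    (∀ i, 1 ≤ i → i ≤ m - 1 → ∃ z, v i < z ∧ z < u i ∧ (p + q).eval z = 0) ∧
    (∃ z, z < u m ∧ (p + q).eval z = 0) ∧
    (∃ s t : Finset ℝ, s.card = m ∧ t.card = m ∧
      (∀ z ∈ s, (p - q).eval z = 0) ∧ (∀ z ∈ t, (p + q).eval z = 0) ∧
      Disjoint s t) := by
  -- powers of -1
  have hpowsucc : ∀ k : ℕ, 1 ≤ k → (-1:ℝ)^k = -((-1:ℝ)^(k-1)) := by
    intro k hk
    conv_lhs => rw [show k = k-1+1 from by omega]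
    rw [pow_succ]; ring
  have hpowsq : ∀ k : ℕ, (-1:ℝ)^k * (-1:ℝ)^k = 1 := by
    intro k; rw [← pow_add]; exact Even.neg_one_pow ⟨k, rfl⟩
  -- chain facts
  have huv : ∀ i, 1 ≤ i → i ≤ m-1 → v i < u i := fun i h1 h2 => (hint i h1 h2).1
  have hvu : ∀ i, 1 ≤ i → i ≤ m-1 → u (i+1) < v i := fun i h1 h2 => (hint i h1 h2).2
  have hu_step : ∀ k, 1 ≤ k → k + 1 ≤ m → u (k+1) < u k := by
    intro k h1 h2
    have h := hint k h1 (by omega)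
    linarith [h.1, h.2]
  have hv_step : ∀ k, 1 ≤ k → k + 1 ≤ m - 1 → v (k+1) < v k := by
    intro k h1 h2
    have ha := hint (k+1) (by omega) h2
    have hb := hint k h1 (by omega)
    linarith [ha.1, hb.2]
  have humono : ∀ j i, 1 ≤ i → i ≤ j → j ≤ m → u j ≤ u i := by
    intro j
    induction j with
    | zero => intro i hi hij _; omega
    | succ n ih =>
      intro i hi hij hj
      rcases Nat.lt_or_ge i (n+1) with h | h
      · have h1 := ih i hi (by omega) (by omega)
        have h2 := hu_step n (by omega) hj
        linarith
      · have : i = n+1 := by omega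
        rw [this]
  have hvmono : ∀ j i, 1 ≤ i → i ≤ j → j ≤ m-1 → v j ≤ v i := by
    intro j
    induction j with
    | zero => intro i hi hij _; omega
    | succ n ih =>
      intro i hi hij hj
      rcases Nat.lt_or_ge i (n+1) with h | h
      · have h1 := ih i hi (by omega) (by omega)
        have h2 := hv_step n (by omega) hj
        linarith
      · have : i = n+1 := by omega
        rw [this]
  -- evaluation formulas
  have hpe : ∀ x : ℝ, p.eval x = cp * ∏ j ∈ Finset.range m, (x - u (j+1)) := by
    intro x; simp [hp, eval_prod]
  have hqe : ∀ x : ℝ, q.eval x = cq * ∏ j ∈ Finset.range (m-1), (x - v (j+1)) := by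
    intro x; simp [hq, eval_prod]
  -- zeros of p, q
  have hpz : ∀ i, 1 ≤ i → i ≤ m → p.eval (u i) = 0 := by
    intro i h1 h2
    rw [hpe]
    have hmem : i - 1 ∈ Finset.range m := Finset.mem_range.2 (by omega)
    rw [Finset.prod_eq_zero hmem (by rw [show i-1+1 = i from by omega]; exact sub_self _),
      mul_zero]
  have hqz : ∀ i, 1 ≤ i → i ≤ m-1 → q.eval (v i) = 0 := by
    intro i h1 h2
    rw [hqe]
    have hmem : i - 1 ∈ Finset.range (m-1) := Finset.mem_range.2 (by omega)
    rw [Finset.prod_eq_zero hmem (by rw [show i-1+1 = i from by omega]; exact sub_self _),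
      mul_zero]
  -- sign facts
  have hqs : ∀ i, 1 ≤ i → i ≤ m → 0 < (-1:ℝ)^(i-1) * q.eval (u i) := by
    intro i h1 h2
    rw [hqe]
    have hneg : ∀ j, j < i-1 → u i < v (j+1) := by
      intro j hj
      have hva := hvmono (i-1) (j+1) (by omega) (by omega) (by omega)
      have hvb := hvu (i-1) (by omega) (by omega)
      rw [show i-1+1 = i from by omega] at hvb
      linarith
    have hpos : ∀ j, i-1 ≤ j → j < m-1 → v (j+1) < u i := by
      intro j hj1 hj2
      have hva := hvmono (j+1) i (by omega) (by omega) (by omega)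
      have hvb := huv i (by omega) (by omega)
      linarith
    have key := sign_prod_aux (fun j => v (j+1)) (u i) (m-1) (i-1) (by omega) hneg hpos
    have hre : (-1:ℝ)^(i-1) * (cq * ∏ j ∈ Finset.range (m-1), (u i - v (j+1)))
        = cq * ((-1:ℝ)^(i-1) * ∏ j ∈ Finset.range (m-1), (u i - v (j+1))) := by ring
    rw [hre]
    exact mul_pos hcq key
  have hps : ∀ i, 1 ≤ i → i ≤ m-1 → 0 < (-1:ℝ)^i * p.eval (v i) := by
    intro i h1 h2
    rw [hpe]
    have hneg : ∀ j, j < i → v i < u (j+1) := by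
      intro j hj
      have hua := humono i (j+1) (by omega) (by omega) (by omega)
      have hub := huv i h1 h2
      linarith
    have hpos : ∀ j, i ≤ j → j < m → u (j+1) < v i := by
      intro j hj1 hj2
      have hua := humono (j+1) (i+1) (by omega) (by omega) (by omega)
      have hub := hvu i h1 h2
      linarith
    have key := sign_prod_aux (fun j => u (j+1)) (v i) m i (by omega) hneg hpos
    have hre : (-1:ℝ)^i * (cp * ∏ j ∈ Finset.range m, (v i - u (j+1)))
        = cp * ((-1:ℝ)^i * ∏ j ∈ Finset.range m, (v i - u (j+1))) := by ring
    rw [hre]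
    exact mul_pos hcp key
  -- degrees and leading coefficients
  have hmonp : (∏ i ∈ Finset.range m, (X - C (u (i+1)))).Monic :=
    monic_prod_of_monic _ _ fun i _ => monic_X_sub_C _
  have hmonq : (∏ i ∈ Finset.range (m-1), (X - C (v (i+1)))).Monic :=
    monic_prod_of_monic _ _ fun i _ => monic_X_sub_C _
  have hdegp : p.degree = (m : ℕ) := by
    rw [hp, degree_C_mul (ne_of_gt hcp), degree_prod]
    simp [degree_X_sub_C]
  have hdegq : q.degree = ((m-1 : ℕ) : WithBot ℕ) := by
    rw [hq, degree_C_mul (ne_of_gt hcq), degree_prod]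
    simp [degree_X_sub_C]
  have hlt : q.degree < p.degree := by
    rw [hdegp, hdegq]
    exact_mod_cast (by omega : m - 1 < m)
  have hlcp : p.leadingCoeff = cp := by
    rw [hp, leadingCoeff_mul, leadingCoeff_C, hmonp.leadingCoeff, mul_one]
  have hd1 : (p-q).degree = (m : ℕ) := by
    rw [degree_sub_eq_left_of_degree_lt hlt, hdegp]
  have hl1 : (p-q).leadingCoeff = cp := by
    rw [leadingCoeff_sub_of_degree_lt hlt, hlcp]
  have ht1 : Filter.Tendsto (fun x => (p-q).eval x) Filter.atTop Filter.atTop :=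
    tendsto_atTop_of_leadingCoeff_nonneg _
      (by rw [hd1]; exact_mod_cast (by omega : 0 < m)) (by rw [hl1]; exact hcp.le)
  have hd2 : (p+q).degree = (m : ℕ) := by
    rw [degree_add_eq_left_of_degree_lt hlt, hdegp]
  have hl2 : (p+q).leadingCoeff = cp := by
    rw [leadingCoeff_add_of_degree_lt' hlt, hlcp]
  have hnd2 : (p+q).natDegree = m := natDegree_eq_of_degree_eq_some hd2
  -- the reflected polynomial g
  have hne : ((-1:ℝ)^m) ≠ 0 := pow_ne_zero _ (by norm_num)
  set g : Polynomial ℝ := C ((-1:ℝ)^m) * ((p+q).comp (-X)) with hgdef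
  have hgev : ∀ x : ℝ, g.eval x = (-1:ℝ)^m * (p+q).eval (-x) := by
    intro x; simp [hgdef, eval_comp]
  have hndx : (-X : Polynomial ℝ).natDegree = 1 := by simp
  have hndg : g.natDegree = m := by
    rw [hgdef, natDegree_C_mul hne, natDegree_comp, hnd2, hndx, mul_one]
  have hgne : g ≠ 0 := by
    intro h
    rw [h, natDegree_zero] at hndg
    omega
  have hgpos : 0 < g.degree := natDegree_pos_iff_degree_pos.1 (by omega)
  have hlcg : g.leadingCoeff = cp := by
    rw [hgdef, leadingCoeff_mul, leadingCoeff_C,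
      leadingCoeff_comp (by rw [hndx]; exact one_ne_zero), hl2, hnd2]
    have : (-X : Polynomial ℝ).leadingCoeff = -1 := by
      rw [leadingCoeff_neg, leadingCoeff_X]
    rw [this]
    have hsq := hpowsq m
    linear_combination cp * hsq
  have ht2 : Filter.Tendsto (fun x => g.eval x) Filter.atTop Filter.atTop :=
    tendsto_atTop_of_leadingCoeff_nonneg _ hgpos (by rw [hlcg]; exact hcp.le)
  -- Part 1
  have H1 : ∃ z, u 1 < z ∧ (p - q).eval z = 0 := by
    obtain ⟨b, hb⟩ := ((ht1.eventually_gt_atTop 0).and (Filter.eventually_gt_atTop (u 1))).exists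
    have ha : (p - q).eval (u 1) < 0 := by
      rw [eval_sub, hpz 1 le_rfl hm]
      have h := hqs 1 le_rfl hm
      norm_num at h
      linarith
    obtain ⟨z, hz1, _, hz3⟩ := ivt_zero (p - q) (le_of_lt hb.2) ha hb.1
    exact ⟨z, hz1, hz3⟩
  -- Part 2
  have H2 : ∀ i, 2 ≤ i → i ≤ m → ∃ z, u i < z ∧ z < v (i-1) ∧ (p - q).eval z = 0 := by
    intro i h2 hmle
    have hab : u i < v (i-1) := by
      have h := hvu (i-1) (by omega) (by omega)
      rw [show i-1+1 = i from by omega] at h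
      exact h
    have hQ := hqs i (by omega) hmle
    have hP := hps (i-1) (by omega) (by omega)
    have hsq := hpowsq (i-1)
    have hQP : 0 < q.eval (u i) * p.eval (v (i-1)) := by
      have h := mul_pos hQ hP
      have hre : ((-1:ℝ)^(i-1) * q.eval (u i)) * ((-1:ℝ)^(i-1) * p.eval (v (i-1)))
          = q.eval (u i) * p.eval (v (i-1)) := by
        linear_combination (q.eval (u i) * p.eval (v (i-1))) * hsq
      linarith [hre ▸ h]
    have hprod : (p-q).eval (u i) * (p-q).eval (v (i-1)) < 0 := by
      rw [eval_sub, eval_sub, hpz i (by omega) hmle, hqz (i-1) (by omega) (by omega)]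
      nlinarith [hQP]
    exact ivt_zero' (p - q) hab.le hprod
  -- Part 3
  have H3 : ∀ i, 1 ≤ i → i ≤ m-1 → ∃ z, v i < z ∧ z < u i ∧ (p + q).eval z = 0 := by
    intro i h1 h2
    have hab := huv i h1 h2
    have hP := hps i h1 h2
    have hQ := hqs i h1 (by omega)
    rw [hpowsucc i h1] at hP
    have hsq := hpowsq (i-1)
    have hPQ : p.eval (v i) * q.eval (u i) < 0 := by
      have h := mul_pos hP hQ
      have hre : (-((-1:ℝ)^(i-1)) * p.eval (v i)) * ((-1:ℝ)^(i-1) * q.eval (u i))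
          = -(p.eval (v i) * q.eval (u i)) := by
        linear_combination (-(p.eval (v i) * q.eval (u i))) * hsq
      linarith [hre ▸ h]
    have hprod : (p+q).eval (v i) * (p+q).eval (u i) < 0 := by
      rw [eval_add, eval_add, hqz i h1 h2, hpz i h1 (by omega), add_zero, zero_add]
      exact hPQ
    exact ivt_zero' (p + q) hab.le hprod
  -- Part 4
  have H4 : ∃ z, z < u m ∧ (p + q).eval z = 0 := by
    obtain ⟨b, hb⟩ :=
      ((ht2.eventually_gt_atTop 0).and (Filter.eventually_gt_atTop (-(u m)))).exists
    have ha : g.eval (-(u m)) < 0 := by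
      rw [hgev, neg_neg, eval_add, hpz m hm le_rfl, zero_add, hpowsucc m hm]
      have hQ := hqs m hm le_rfl
      nlinarith [hQ]
    obtain ⟨z', hz1, _, hz3⟩ := ivt_zero g (le_of_lt hb.2) ha hb.1
    rw [hgev] at hz3
    have hz4 : (p+q).eval (-z') = 0 := by
      rcases mul_eq_zero.1 hz3 with h | h
      · exact absurd h hne
      · exact h
    exact ⟨-z', by linarith, hz4⟩
  -- choice functions
  have H2' : ∀ i : ℕ, ∃ z : ℝ, 2 ≤ i → i ≤ m → u i < z ∧ z < v (i-1) ∧ (p - q).eval z = 0 := by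
    intro i
    by_cases h : 2 ≤ i ∧ i ≤ m
    · obtain ⟨z, hz⟩ := H2 i h.1 h.2; exact ⟨z, fun _ _ => hz⟩
    · exact ⟨0, fun h1 h2 => absurd ⟨h1, h2⟩ h⟩
  have H3' : ∀ i : ℕ, ∃ z : ℝ, 1 ≤ i → i ≤ m-1 → v i < z ∧ z < u i ∧ (p + q).eval z = 0 := by
    intro i
    by_cases h : 1 ≤ i ∧ i ≤ m-1
    · obtain ⟨z, hz⟩ := H3 i h.1 h.2; exact ⟨z, fun _ _ => hz⟩
    · exact ⟨0, fun h1 h2 => absurd ⟨h1, h2⟩ h⟩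
  choose f2 hf2 using H2'
  choose g3 hg3 using H3'
  obtain ⟨z1, hz1, hz1'⟩ := H1
  obtain ⟨zm, hzm, hzm'⟩ := H4
  set F : ℕ → ℝ := fun i => if i = 1 then z1 else f2 i with hF
  set G : ℕ → ℝ := fun i => if i = m then zm else g3 i with hG
  have hFlow : ∀ i, 1 ≤ i → i ≤ m → u i < F i := by
    intro i h1 h2
    by_cases h : i = 1
    · subst h; simpa [hF] using hz1
    · simp only [hF, if_neg h]
      exact (hf2 i (by omega) h2).1
  have hFup : ∀ i, 2 ≤ i → i ≤ m → F i < v (i-1) := by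
    intro i h1 h2
    have h : i ≠ 1 := by omega
    simp only [hF, if_neg h]
    exact (hf2 i h1 h2).2.1
  have hFzero : ∀ i, 1 ≤ i → i ≤ m → (p - q).eval (F i) = 0 := by
    intro i h1 h2
    by_cases h : i = 1
    · subst h; simpa [hF] using hz1'
    · simp only [hF, if_neg h]
      exact (hf2 i (by omega) h2).2.2
  have hGup : ∀ i, 1 ≤ i → i ≤ m → G i < u i := by
    intro i h1 h2
    by_cases h : i = m
    · subst h; simpa [hG] using hzm
    · simp only [hG, if_neg h]
      exact (hg3 i h1 (by omega)).2.1
  have hGlow : ∀ i, 1 ≤ i → i ≤ m-1 → v i < G i := by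
    intro i h1 h2
    have h : i ≠ m := by omega
    simp only [hG, if_neg h]
    exact (hg3 i h1 h2).1
  have hGzero : ∀ i, 1 ≤ i → i ≤ m → (p + q).eval (G i) = 0 := by
    intro i h1 h2
    by_cases h : i = m
    · subst h; simpa [hG] using hzm'
    · simp only [hG, if_neg h]
      exact (hg3 i h1 (by omega)).2.2
  have hFG : ∀ i j, 1 ≤ i → i ≤ m → 1 ≤ j → j ≤ m → F i ≠ G j := by
    intro i j hi1 hi2 hj1 hj2 he
    rcases Nat.lt_or_ge j i with h | h
    · have hgl := hGlow j hj1 (by omega)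
      have hvm := hvmono (i-1) j hj1 (by omega) (by omega)
      have hfu := hFup i (by omega) hi2
      linarith
    · have hgu := hGup j hj1 hj2
      have hum := humono j i hi1 h hj2
      have hfl := hFlow i hi1 hi2
      linarith
  have hFinj : Set.InjOn F (Finset.Icc 1 m) := by
    intro i hi j hj hij
    simp only [Finset.coe_Icc, Set.mem_Icc] at hi hj
    by_contra hne'
    rcases Nat.lt_or_ge i j with h | h
    · have h1 := hFup j (by omega) hj.2
      have h2 := hvmono (j-1) i hi.1 (by omega) (by omega)
      have h3 := huv i hi.1 (by omega)
      have h4 := hFlow i hi.1 hi.2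
      linarith
    · have h' : j < i := by omega
      have h1 := hFup i (by omega) hi.2
      have h2 := hvmono (i-1) j hj.1 (by omega) (by omega)
      have h3 := huv j hj.1 (by omega)
      have h4 := hFlow j hj.1 hj.2
      linarith
  have hGinj : Set.InjOn G (Finset.Icc 1 m) := by
    intro i hi j hj hij
    simp only [Finset.coe_Icc, Set.mem_Icc] at hi hj
    by_contra hne'
    rcases Nat.lt_or_ge i j with h | h
    · have h1 := hGup j (by omega) hj.2
      have h2 := humono j (i+1) (by omega) (by omega) hj.2
      have h3 := hvu i hi.1 (by omega)
      have h4 := hGlow i hi.1 (by omega)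
      linarith
    · have h' : j < i := by omega
      have h1 := hGup i (by omega) hi.2
      have h2 := humono i (j+1) (by omega) (by omega) hi.2
      have h3 := hvu j hj.1 (by omega)
      have h4 := hGlow j hj.1 (by omega)
      linarith
  refine ⟨⟨z1, hz1, hz1'⟩, H2, H3, ⟨zm, hzm, hzm'⟩,
    (Finset.Icc 1 m).image F, (Finset.Icc 1 m).image G, ?_, ?_, ?_, ?_, ?_⟩
  · rw [Finset.card_image_of_injOn hFinj, Nat.card_Icc]; omega
  · rw [Finset.card_image_of_injOn hGinj, Nat.card_Icc]; omega
  · intro z hz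
    obtain ⟨i, hi, rfl⟩ := Finset.mem_image.1 hz
    rw [Finset.mem_Icc] at hi
    exact hFzero i hi.1 hi.2
  · intro z hz
    obtain ⟨i, hi, rfl⟩ := Finset.mem_image.1 hz
    rw [Finset.mem_Icc] at hi
    exact hGzero i hi.1 hi.2
  · rw [Finset.disjoint_left]
    intro a ha hb
    obtain ⟨i, hi, rfl⟩ := Finset.mem_image.1 ha
    obtain ⟨j, hj, he⟩ := Finset.mem_image.1 hb
    rw [Finset.mem_Icc] at hi hj
    exact hFG i j hi.1 hi.2 hj.1 hj.2 he.symm
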